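/- In the SGB clustering algorithm, every processed set is a member of at least one cluster, and every cluster center contains (as supersets) all members of its cluster. -/

import Mathlib

variable {α : Type*} [DecidableEq α]

/-- One step of the SGB algorithm: process schema set `s` against the current list of
clusters (each cluster is a pair `(center, members)`).  If `s` is contained in some
existing center, add it as a member of every cluster whose center contains it;
otherwise make it a new center (and a member of its own cluster). -/
def sgbStep (clusters : List (Finset α × List (Finset α))) (s : Finset α) :
    List (Finset α × List (Finset α)) :=
  if clusters.any (fun c => decide (s ⊆ c.1)) then
    clusters.map (fun c => if s ⊆ c.1 then (c.1, s :: c.2) else c)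
  else
    clusters ++ [(s, [s])]

/-- The clusters produced by SGB after processing the list `S` in order. -/
def sgbClusters (S : List (Finset α)) : List (Finset α × List (Finset α)) :=
  S.foldl sgbStep []

lemma sgbStep_inv {clusters : List (Finset α × List (Finset α))} {s : Finset α}
    (h : ∀ c ∈ clusters, ∀ m ∈ c.2, m ⊆ c.1) :
    ∀ c ∈ sgbStep clusters s, ∀ m ∈ c.2, m ⊆ c.1 := by
  unfold sgbStep
  split
  · intro c hc m hm
    simp only [List.mem_map] at hc
    obtain ⟨d, hd, rfl⟩ := hc
    by_cases hsub : s ⊆ d.1 <;> simp [hsub] at hm ⊢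
    · rcases hm with rfl | hm
      · exact hsub
      · exact h d hd m hm
    · exact h d hd m hm
  · intro c hc m hm
    simp only [List.mem_append, List.mem_singleton] at hc
    rcases hc with hc | rfl
    · exact h c hc m hm
    · simp at hm; subst hm; rfl

lemma sgbStep_mono {clusters : List (Finset α × List (Finset α))} {s m : Finset α}
    (h : ∃ c ∈ clusters, m ∈ c.2) : ∃ c ∈ sgbStep clusters s, m ∈ c.2 := by
  obtain ⟨c, hc, hm⟩ := h
  unfold sgbStep
  split
  · by_cases hsub : s ⊆ c.1
    · exact ⟨(c.1, s :: c.2), List.mem_map.2 ⟨c, hc, by simp [hsub]⟩, by simp [hm]⟩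
    · exact ⟨c, List.mem_map.2 ⟨c, hc, by simp [hsub]⟩, hm⟩
  · exact ⟨c, by simp [hc], hm⟩

lemma sgbStep_self (clusters : List (Finset α × List (Finset α))) (s : Finset α) :
    ∃ c ∈ sgbStep clusters s, s ∈ c.2 := by
  unfold sgbStep
  split
  · next h =>
    simp only [List.any_eq_true, decide_eq_true_eq] at h
    obtain ⟨c, hc, hsub⟩ := h
    exact ⟨(c.1, s :: c.2), List.mem_map.2 ⟨c, hc, by simp [hsub]⟩, by simp⟩
  · exact ⟨(s, [s]), by simp, by simp⟩

lemma sgb_foldl (S : List (Finset α)) :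
    ∀ clusters : List (Finset α × List (Finset α)),
      (∀ c ∈ clusters, ∀ m ∈ c.2, m ⊆ c.1) →
      ((∀ s ∈ S, ∃ c ∈ S.foldl sgbStep clusters, s ∈ c.2) ∧
       (∀ c ∈ S.foldl sgbStep clusters, ∀ m ∈ c.2, m ⊆ c.1) ∧
       (∀ m : Finset α, (∃ c ∈ clusters, m ∈ c.2) →
          ∃ c ∈ S.foldl sgbStep clusters, m ∈ c.2)) := by
  induction S with
  | nil => intro clusters h; exact ⟨by simp, h, fun m hm => hm⟩
  | cons a S ih =>
    intro clusters h
    obtain ⟨h1, h2, h3⟩ := ih (sgbStep clusters a) (sgbStep_inv h)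
    refine ⟨?_, h2, fun m hm => h3 m (sgbStep_mono hm)⟩
    intro s hs
    rcases List.mem_cons.1 hs with rfl | hs
    · exact h3 s (sgbStep_self clusters s)
    · exact h1 s hs

/-- **SGB clustering invariants**: every processed set is a member of at least one
cluster, and every cluster center contains (as a superset) each member of its cluster. -/
theorem sgb_membership_and_centers (S : List (Finset α))
    (hsorted : S.Pairwise (fun a b => b.card ≤ a.card)) :
    (∀ s ∈ S, ∃ c ∈ sgbClusters S, s ∈ c.2) ∧
    (∀ c ∈ sgbClusters S, ∀ m ∈ c.2, m ⊆ c.1) := by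
  obtain ⟨h1, h2, _⟩ := sgb_foldl S [] (by simp)
  exact ⟨h1, h2⟩
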